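/- Let ρ : ℝ → ℝ be a nonnegative integrable density supported on [m, M] with 0 < ρ_min ≤ ρ ≤ ρ_max on [m, M], let r > 0 with M − m > 2r, and let γ be the HK flow map γ(x) = (∫_{I(x)} z ρ(z) dz)/(∫_{I(x)} ρ(z) dz), I(x) = [x−r, x+r] ∩ [m, M]. Then for x, y ∈ [m, M] with x < y and y − x ≥ 2r, γ(y) − γ(x) ≥ ((b−a) + (q−p)) / (1 + √(ρ_max/ρ_min)), where [a,b] = I(x) and [p,q] = I(y). -/

import Mathlib

open MeasureTheory

set_option maxHeartbeats 1000000 in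

lemma centroid_key (ρmin ρmax : ℝ) (ρ : ℝ → ℝ)
    (hρmin : 0 < ρmin) (hρmax : ρmin ≤ ρmax)
    (a b : ℝ) (hab : a < b)
    (hint : IntegrableOn ρ (Set.Icc a b))
    (hbd : ∀ z ∈ Set.Icc a b, ρmin ≤ ρ z ∧ ρ z ≤ ρmax) :
    (∫ z in Set.Icc a b, z * ρ z) / (∫ z in Set.Icc a b, ρ z)
      ≤ b - (b - a) / (1 + Real.sqrt (ρmax / ρmin)) ∧
    a + (b - a) / (1 + Real.sqrt (ρmax / ρmin)) ≤
      (∫ z in Set.Icc a b, z * ρ z) / (∫ z in Set.Icc a b, ρ z) := by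
  set k := Real.sqrt (ρmax / ρmin) with hkdef
  have hk1 : 1 ≤ k := Real.one_le_sqrt.mpr ((one_le_div hρmin).mpr hρmax)
  have hk0 : (0:ℝ) < 1 + k := by linarith
  have hkne : (1:ℝ) + k ≠ 0 := ne_of_gt hk0
  have hksq : ρmin * k ^ 2 = ρmax := by
    rw [hkdef, Real.sq_sqrt (div_nonneg (by linarith) hρmin.le),
      mul_div_cancel₀ _ (ne_of_gt hρmin)]
  set L := b - a with hLdef
  have hL : 0 < L := by simp only [hLdef]; linarith
  set den := ∫ z in Set.Icc a b, ρ z with hden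
  have hdenge : ρmin * L ≤ den := by
    have h1 : ∫ z in Set.Icc a b, ρmin ≤ ∫ z in Set.Icc a b, ρ z := by
      apply setIntegral_mono_on (integrableOn_const measure_Icc_lt_top.ne) hint
        measurableSet_Icc
      exact fun z hz => (hbd z hz).1
    rwa [setIntegral_const, smul_eq_mul, Real.volume_real_Icc_of_le (by linarith),
      mul_comm] at h1
  have hdenpos : 0 < den := lt_of_lt_of_le (by positivity) hdenge
  set num := ∫ z in Set.Icc a b, z * ρ z with hnum
  have haffine : ∀ c d u v : ℝ, ∫ z in u..v, (c - d * z) = c * (v - u) - d * ((v^2 - u^2)/2) := by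
    intro c d u v
    have h1 : IntervalIntegrable (fun z : ℝ => d * z) volume u v :=
      (continuous_const.mul continuous_id).intervalIntegrable _ _
    rw [intervalIntegral.integral_sub (intervalIntegrable_const) h1,
      intervalIntegral.integral_const, intervalIntegral.integral_const_mul, integral_id,
      smul_eq_mul, mul_comm]
  have hsL : 0 < L / (1 + k) := by positivity
  have hsL2 : L / (1 + k) ≤ L := by
    rw [div_le_iff₀ hk0]; nlinarith
  -- core estimate for affine φ z = c - d*z, split point s, weights w1 w2
  have hcore : ∀ c d s w1 w2 : ℝ, a ≤ s → s ≤ b →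
      (∀ z ∈ Set.Icc a s, w1 * (c - d * z) ≤ (c - d * z) * ρ z) →
      (∀ z ∈ Set.Ioc s b, w2 * (c - d * z) ≤ (c - d * z) * ρ z) →
      0 ≤ w1 * (c * (s - a) - d * ((s^2 - a^2)/2))
        + w2 * (c * (b - s) - d * ((b^2 - s^2)/2)) →
      0 ≤ c * den - d * num := by
    intro c d s w1 w2 has hsb hpt1 hpt2 hval
    set φ : ℝ → ℝ := fun z => c - d * z with hφdef
    have hφcont : Continuous φ := continuous_const.sub (continuous_const.mul continuous_id)
    have hint1 : IntegrableOn (fun z => φ z * ρ z) (Set.Icc a s) :=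
      ((hint.mono_set (Set.Icc_subset_Icc le_rfl hsb)).continuousOn_mul hφcont.continuousOn
        isCompact_Icc)
    have hint2 : IntegrableOn (fun z => φ z * ρ z) (Set.Ioc s b) :=
      IntegrableOn.mono_set
        ((hint.mono_set (Set.Icc_subset_Icc has le_rfl)).continuousOn_mul hφcont.continuousOn
          isCompact_Icc) Set.Ioc_subset_Icc_self
    have hsplit : (∫ z in Set.Icc a b, φ z * ρ z)
        = (∫ z in Set.Icc a s, φ z * ρ z) + ∫ z in Set.Ioc s b, φ z * ρ z := by
      rw [← Set.Icc_union_Ioc_eq_Icc has hsb]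
      exact setIntegral_union (by
        apply Set.disjoint_left.mpr
        rintro z ⟨_, h1⟩ ⟨h2, _⟩; exact absurd h1 (not_le.mpr h2)) measurableSet_Ioc hint1 hint2
    have hlow1 : w1 * ∫ z in Set.Icc a s, φ z ≤ ∫ z in Set.Icc a s, φ z * ρ z := by
      rw [← integral_const_mul]
      exact setIntegral_mono_on ((continuous_const.mul hφcont).integrableOn_Icc) hint1
        measurableSet_Icc hpt1
    have hlow2 : w2 * ∫ z in Set.Ioc s b, φ z ≤ ∫ z in Set.Ioc s b, φ z * ρ z := by
      rw [← integral_const_mul]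
      exact setIntegral_mono_on
        (((continuous_const.mul hφcont).integrableOn_Icc).mono_set Set.Ioc_subset_Icc_self)
        hint2 measurableSet_Ioc hpt2
    have hval1 : (∫ z in Set.Icc a s, φ z) = c * (s - a) - d * ((s^2 - a^2)/2) := by
      rw [integral_Icc_eq_integral_Ioc, ← intervalIntegral.integral_of_le has, haffine]
    have hval2 : (∫ z in Set.Ioc s b, φ z) = c * (b - s) - d * ((b^2 - s^2)/2) := by
      rw [← intervalIntegral.integral_of_le hsb, haffine]
    have hφint : (∫ z in Set.Icc a b, φ z * ρ z) = c * den - d * num := by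
      have heq : ∀ z : ℝ, φ z * ρ z = c * ρ z - d * (z * ρ z) := fun z => by
        simp only [hφdef]; ring
      have hi2 : IntegrableOn (fun z : ℝ => z * ρ z) (Set.Icc a b) :=
        hint.continuousOn_mul (continuous_id.continuousOn) isCompact_Icc
      simp_rw [heq]
      rw [integral_sub (hint.const_mul c) (hi2.const_mul d), integral_const_mul,
        integral_const_mul]
    have h0 : 0 ≤ ∫ z in Set.Icc a b, φ z * ρ z := by
      rw [hsplit]
      calc (0:ℝ) ≤ w1 * (∫ z in Set.Icc a s, φ z) + w2 * ∫ z in Set.Ioc s b, φ z := by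
            rw [hval1, hval2]; exact hval
        _ ≤ _ := add_le_add hlow1 hlow2
    rwa [hφint] at h0
  have hdm : L / (1 + k) * (1 + k) = L := div_mul_cancel₀ _ hkne
  have hpt : ∀ w u v : ℝ, 0 ≤ u → w ≤ v → w * u ≤ u * v := fun w u v h1 h2 => by nlinarith
  have hpt' : ∀ w u v : ℝ, u ≤ 0 → v ≤ w → w * u ≤ u * v := fun w u v h1 h2 => by nlinarith
  constructor
  · -- upper bound
    have h := hcore ((1+k)*b - L) (1+k) (b - L/(1+k)) ρmin ρmax
      (by simp only [hLdef] at hsL2 ⊢; linarith)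
      (by linarith)
      (by
        intro z hz
        have hz2 : z ≤ b - L/(1+k) := hz.2
        have h3 : L / (1+k) ≤ b - z := by linarith
        rw [div_le_iff₀ hk0] at h3
        have h4 : 0 ≤ (1+k)*b - L - (1+k)*z := by nlinarith
        have h5 := (hbd z ⟨hz.1, by linarith [hz.2]⟩).1
        have := hpt ρmin ((1+k)*b - L - (1+k)*z) (ρ z) h4 h5
        have e2 : (1+k)*b - L - (1+k)*z = (1+k)*b - L - (1+k)*z := rfl
        calc ρmin * ((1+k)*b - L - (1+k)*z) ≤ ((1+k)*b - L - (1+k)*z) * ρ z := this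
          _ = ((1+k)*b - L - (1+k)*z) * ρ z := rfl)
      (by
        intro z hz
        have hz1 : b - L/(1+k) < z := hz.1
        have h3 : b - z < L / (1+k) := by linarith
        rw [lt_div_iff₀ hk0] at h3
        have h4 : (1+k)*b - L - (1+k)*z ≤ 0 := by nlinarith
        have h5 := (hbd z ⟨by linarith [hz.1.le, hsL], hz.2⟩).2
        exact hpt' ρmax ((1+k)*b - L - (1+k)*z) (ρ z) h4 h5)
      (by
        have : ρmin * (((1+k)*b - L) * ((b - L/(1+k)) - a) - (1+k) * (((b - L/(1+k))^2 - a^2)/2))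
          + ρmax * (((1+k)*b - L) * (b - (b - L/(1+k))) - (1+k) * ((b^2 - (b - L/(1+k))^2)/2))
            = 0 := by
          rw [← hksq]
          field_simp
          ring
        linarith [this])
    -- h : 0 ≤ ((1+k)*b - L) * den - (1+k) * num
    rw [div_le_iff₀ hdenpos]
    have e : (1+k) * ((b - L/(1+k)) * den) = ((1+k)*b - L) * den := by
      have e1 : (1+k) * ((b - L/(1+k)) * den) = ((1+k)*b - L/(1+k)*(1+k)) * den := by ring
      rw [e1, hdm]
    have : (1+k) * num ≤ (1+k) * ((b - L/(1+k)) * den) := by rw [e]; linarith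
    exact le_of_mul_le_mul_left this hk0
  · -- lower bound
    have h := hcore (-((1+k)*a + L)) (-(1+k)) (a + L/(1+k)) ρmax ρmin
      (by linarith)
      (by simp only [hLdef] at hsL2 ⊢; linarith)
      (by
        intro z hz
        have hz2 : z ≤ a + L/(1+k) := hz.2
        have h3 : z - a ≤ L / (1+k) := by linarith
        rw [le_div_iff₀ hk0] at h3
        have h4 : -((1+k)*a + L) - (-(1+k)) * z ≤ 0 := by nlinarith
        have h5 := (hbd z ⟨hz.1, by linarith [hz.2, hsL2]⟩).2
        exact hpt' ρmax (-((1+k)*a + L) - (-(1+k)) * z) (ρ z) h4 h5)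
      (by
        intro z hz
        have hz1 : a + L/(1+k) < z := hz.1
        have h3 : L / (1+k) < z - a := by linarith
        rw [div_lt_iff₀ hk0] at h3
        have h4 : 0 ≤ -((1+k)*a + L) - (-(1+k)) * z := by nlinarith
        have h5 := (hbd z ⟨by linarith [hz.1.le, hsL], hz.2⟩).1
        exact hpt ρmin (-((1+k)*a + L) - (-(1+k)) * z) (ρ z) h4 h5)
      (by
        have : ρmax * ((-((1+k)*a + L)) * ((a + L/(1+k)) - a) - (-(1+k)) * (((a + L/(1+k))^2 - a^2)/2))
          + ρmin * ((-((1+k)*a + L)) * (b - (a + L/(1+k))) - (-(1+k)) * ((b^2 - (a + L/(1+k))^2)/2))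
            = 0 := by
          rw [← hksq]
          field_simp
          ring
        linarith [this])
    -- h : 0 ≤ -((1+k)*a + L) * den + (1+k) * num
    rw [le_div_iff₀ hdenpos]
    have e : (1+k) * ((a + L/(1+k)) * den) = ((1+k)*a + L) * den := by
      have e1 : (1+k) * ((a + L/(1+k)) * den) = ((1+k)*a + L/(1+k)*(1+k)) * den := by ring
      rw [e1, hdm]
    have : (1+k) * ((a + L/(1+k)) * den) ≤ (1+k) * num := by rw [e]; linarith
    exact le_of_mul_le_mul_left this hk0

set_option maxHeartbeats 1000000 in
theorem stmt_9 (m M r ρmin ρmax : ℝ) (ρ : ℝ → ℝ)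
    (hr : 0 < r) (hMm : M - m > 2 * r)
    (hρ0 : ∀ x, 0 ≤ ρ x) (hsupp : ∀ x, x ∉ Set.Icc m M → ρ x = 0)
    (hint : IntegrableOn ρ (Set.Icc m M))
    (hρmin : 0 < ρmin) (hρmax : ρmin ≤ ρmax)
    (hbd : ∀ x ∈ Set.Icc m M, ρmin ≤ ρ x ∧ ρ x ≤ ρmax)
    (γ : ℝ → ℝ)
    (hγ : ∀ x, γ x = (∫ z in Set.Icc (x - r) (x + r) ∩ Set.Icc m M, z * ρ z) /
      (∫ z in Set.Icc (x - r) (x + r) ∩ Set.Icc m M, ρ z)) :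
    ∀ x ∈ Set.Icc m M, ∀ y ∈ Set.Icc m M, x < y → y - x ≥ 2 * r →
      γ y - γ x ≥ ((min (x + r) M - max (x - r) m) + (min (y + r) M - max (y - r) m)) /
        (1 + Real.sqrt (ρmax / ρmin)) := by
  intro x hx y hy hxy hsep
  obtain ⟨hxm, hxM⟩ := hx
  obtain ⟨hym, hyM⟩ := hy
  set k := Real.sqrt (ρmax / ρmin) with hkdef
  have hk1 : 1 ≤ k := Real.one_le_sqrt.mpr ((one_le_div hρmin).mpr hρmax)
  have hk0 : (0:ℝ) < 1 + k := by linarith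
  -- interval endpoints
  have hablt : ∀ u : ℝ, m ≤ u → u ≤ M → max (u - r) m < min (u + r) M :=
    fun u h1 h2 => max_lt (lt_min (by linarith) (by linarith)) (lt_min (by linarith) (by linarith))
  have hsub : ∀ u : ℝ, Set.Icc (max (u - r) m) (min (u + r) M) ⊆ Set.Icc m M :=
    fun u => Set.Icc_subset_Icc (le_max_right _ _) (min_le_right _ _)
  have hkey : ∀ u : ℝ, m ≤ u → u ≤ M →
      γ u = (∫ z in Set.Icc (max (u - r) m) (min (u + r) M), z * ρ z) /
        (∫ z in Set.Icc (max (u - r) m) (min (u + r) M), ρ z) := by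
    intro u _ _
    rw [hγ u, Set.Icc_inter_Icc]
  have hkx := centroid_key ρmin ρmax ρ hρmin hρmax (max (x - r) m) (min (x + r) M)
    (hablt x hxm hxM) (hint.mono_set (hsub x)) (fun z hz => hbd z (hsub x hz))
  have hky := centroid_key ρmin ρmax ρ hρmin hρmax (max (y - r) m) (min (y + r) M)
    (hablt y hym hyM) (hint.mono_set (hsub y)) (fun z hz => hbd z (hsub y hz))
  rw [hkey x hxm hxM, hkey y hym hyM] at *
  have h1 := hkx.1
  have h2 := hky.2
  have hgap : min (x + r) M ≤ max (y - r) m :=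
    le_trans (min_le_left _ _) (le_trans (by linarith) (le_max_left _ _))
  rw [ge_iff_le, add_div]
  linarith
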